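/- Let G be a graph, w : V(G) → ℝ≥0 a weight function, and 𝓗 a class of graphs. Let 𝓧 = {X ⊆ V(G) : G[X] ∈ 𝓗 and G[X] is connected}, and define w°(X) = Σ_{v∈X} w(v). Then the maximum weight of an induced 𝓗-packing in G equals the maximum weight (under w°) of an independent set in the induced subgraph of the blob graph G° on vertex set 𝓧. -/

import Mathlib

open SimpleGraph

/-- The blob graph `G°` of `G`. -/
def blobGraph {V : Type*} (G : SimpleGraph V) :
    SimpleGraph {X : Set V // (G.induce X).Connected} :=
  SimpleGraph.fromRel (fun X Y => (G.induce (X.1 ∪ Y.1)).Connected)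

/-- The vertex set (as a subset of `V`) of the connected component of `G[S]`
containing the vertex `v ∈ S`. -/
def compSet {V : Type*} (G : SimpleGraph V) (S : Set V) (v : ↥S) : Set V :=
  {u : V | ∃ hu : u ∈ S, (G.induce S).Reachable ⟨u, hu⟩ v}

section helpers

variable {V : Type*} (G : SimpleGraph V)

lemma reach_mono {s s' : Set V} (h : s ⊆ s') {a b : V}
    (ha : a ∈ s) (hb : b ∈ s) (hr : (G.induce s).Reachable ⟨a, ha⟩ ⟨b, hb⟩) :
    (G.induce s').Reachable ⟨a, h ha⟩ ⟨b, h hb⟩ :=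
  hr.map (G.induceHomOfLE h).toHom

lemma self_mem_compSet (S : Set V) (v : ↥S) : v.1 ∈ compSet G S v :=
  ⟨v.2, Reachable.refl v⟩

lemma compSet_subset (S : Set V) (v : ↥S) : compSet G S v ⊆ S :=
  fun _ hu => hu.1

lemma compSet_eq_of_reach {S : Set V} {v v' : ↥S}
    (h : (G.induce S).Reachable v v') : compSet G S v = compSet G S v' := by
  ext u
  exact ⟨fun ⟨hu, hr⟩ => ⟨hu, hr.trans h⟩, fun ⟨hu, hr⟩ => ⟨hu, hr.trans h.symm⟩⟩

lemma compSet_eq_of_common {S : Set V} {v v' : ↥S} {z : V}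
    (hz : z ∈ compSet G S v) (hz' : z ∈ compSet G S v') :
    compSet G S v = compSet G S v' := by
  obtain ⟨hzS, hr⟩ := hz
  obtain ⟨hzS', hr'⟩ := hz'
  exact compSet_eq_of_reach G (hr.symm.trans hr')

lemma compSet_connected (S : Set V) (v : ↥S) :
    (G.induce (compSet G S v)).Connected := by
  classical
  apply G.induce_connected_of_patches v.1 (self_mem_compSet G S v)
  intro x hx
  obtain ⟨hxS, hreach⟩ := hx
  obtain ⟨p⟩ := hreach
  let q := p.map (SimpleGraph.Embedding.induce S).toHom
  refine ⟨{y | y ∈ q.support}, ?_, ?_, ?_, ?_⟩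
  · intro y hy
    have hy' : y ∈ p.support.map Subtype.val := by
      have hy2 : y ∈ q.support := hy
      rw [SimpleGraph.Walk.support_map] at hy2
      exact hy2
    simp only [List.mem_map] at hy'
    obtain ⟨z, hz, rfl⟩ := hy'
    exact ⟨z.2, ⟨p.dropUntil z hz⟩⟩
  · exact q.end_mem_support
  · exact q.start_mem_support
  · exact (q.connected_induce_support).preconnected _ _

lemma compSet_eq_of_union_conn {S : Set V} {v v' : ↥S}
    (h : (G.induce (compSet G S v ∪ compSet G S v')).Connected) :
    compSet G S v = compSet G S v' := by
  have h1 : v.1 ∈ compSet G S v ∪ compSet G S v' :=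
    Or.inl (self_mem_compSet G S v)
  have h2 : v'.1 ∈ compSet G S v ∪ compSet G S v' :=
    Or.inr (self_mem_compSet G S v')
  have hsub : compSet G S v ∪ compSet G S v' ⊆ S :=
    Set.union_subset (compSet_subset G S v) (compSet_subset G S v')
  have hr : (G.induce S).Reachable v v' :=
    reach_mono G hsub h1 h2 (h.preconnected ⟨v.1, h1⟩ ⟨v'.1, h2⟩)
  exact compSet_eq_of_reach G hr

lemma walk_stay {S X : Set V}
    (hclosed : ∀ a b : V, a ∈ S → b ∈ X → G.Adj a b → a ∈ X)
    {a b : ↥S} (p : (G.induce S).Walk a b) (hb : b.1 ∈ X) : a.1 ∈ X := by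
  induction p with
  | nil => exact hb
  | @cons u c d h p ih => exact hclosed u.1 c.1 u.2 (ih hb) h

end helpers

/-- The maximum weight of an induced `𝓗`-packing in `G` (where `P X` encodes
`G[X] ∈ 𝓗`) equals the maximum weight of an independent set of the induced subgraph
of the blob graph `G°` on the vertices `X` with `G[X] ∈ 𝓗` and `G[X]` connected,
weighted by `w°(X) = Σ_{v ∈ X} w v`. -/
theorem stmt6 {V : Type*} [Fintype V] (G : SimpleGraph V) (w : V → NNReal)
    (P : Set V → Prop) :
    sSup {r : NNReal | ∃ S : Set V,
        (∀ v : ↥S, P (compSet G S v)) ∧ r = ∑ᶠ v ∈ S, w v} =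
      sSup {r : NNReal | ∃ 𝒮 : Set {X : Set V // (G.induce X).Connected},
        (∀ X ∈ 𝒮, P X.1) ∧
        (∀ X ∈ 𝒮, ∀ Y ∈ 𝒮, X ≠ Y → ¬ (blobGraph G).Adj X Y) ∧
        r = ∑ᶠ X ∈ 𝒮, ∑ᶠ v ∈ X.1, w v} := by
  classical
  congr 1
  ext r
  constructor
  · rintro ⟨S, hP, rfl⟩
    set C : ↥S → {X : Set V // (G.induce X).Connected} :=
      fun v => ⟨compSet G S v, compSet_connected G S v⟩ with hC
    have hS_eq : S = ⋃ X ∈ Set.range C, (X : Set V) := by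
      apply Set.Subset.antisymm
      · intro u hu
        exact Set.mem_biUnion (Set.mem_range_self (⟨u, hu⟩ : ↥S))
          (self_mem_compSet G S ⟨u, hu⟩)
      · intro u hu
        simp only [Set.mem_iUnion] at hu
        obtain ⟨X, ⟨v, rfl⟩, huX⟩ := hu
        exact compSet_subset G S v huX
    refine ⟨Set.range C, ?_, ?_, ?_⟩
    · rintro X ⟨v, rfl⟩
      exact hP v
    · rintro X ⟨v, rfl⟩ Y ⟨v', rfl⟩ hne hadj
      rw [blobGraph, SimpleGraph.fromRel_adj] at hadj
      refine hne (Subtype.ext ?_)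
      rcases hadj.2 with h | h
      · exact compSet_eq_of_union_conn G h
      · exact (compSet_eq_of_union_conn G h).symm
    · have hdisj : (Set.range C).PairwiseDisjoint (Subtype.val) := by
        rintro X ⟨v, rfl⟩ Y ⟨v', rfl⟩ hne
        rw [Function.onFun, Set.disjoint_left]
        intro z hzX hzY
        exact hne (Subtype.ext (compSet_eq_of_common G hzX hzY))
      have h := finsum_mem_biUnion hdisj (Set.toFinite _)
        (fun i _ => Set.toFinite _) (f := w)
      rw [← hS_eq] at h
      exact h
  · rintro ⟨𝒮, hP, hInd, rfl⟩
    have hnotconn : ∀ X ∈ 𝒮, ∀ Y ∈ 𝒮, X ≠ Y →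
        ¬ (G.induce (X.1 ∪ Y.1)).Connected := by
      intro X hX Y hY hne hconn
      exact hInd X hX Y hY hne
        ((SimpleGraph.fromRel_adj _ _ _).mpr ⟨hne, Or.inl hconn⟩)
    have hnoedge : ∀ X ∈ 𝒮, ∀ Y ∈ 𝒮, X ≠ Y →
        ∀ a ∈ X.1, ∀ b ∈ Y.1, ¬ G.Adj a b := by
      intro X hX Y hY hne a ha b hb hadj
      exact hnotconn X hX Y hY hne
        (SimpleGraph.connected_induce_union X.2.preconnected Y.2.preconnected ha hb hadj)
    have hdisj : ∀ X ∈ 𝒮, ∀ Y ∈ 𝒮, X ≠ Y → Disjoint X.1 Y.1 := by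
      intro X hX Y hY hne
      rw [Set.disjoint_left]
      intro z hzX hzY
      exact hnotconn X hX Y hY hne
        (SimpleGraph.induce_union_connected X.2.preconnected Y.2.preconnected ⟨z, hzX, hzY⟩)
    set S : Set V := ⋃ X ∈ 𝒮, X.1 with hS
    have hcover : ∀ u ∈ S, ∃ X ∈ 𝒮, u ∈ X.1 := by
      intro u hu
      simpa [hS, Set.mem_iUnion] using hu
    refine ⟨S, ?_, ?_⟩
    · intro v
      obtain ⟨X, hX, hvX⟩ := hcover v.1 v.2
      have hXS : X.1 ⊆ S := fun z hz => Set.mem_biUnion hX hz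
      have hclosed : ∀ a b : V, a ∈ S → b ∈ X.1 → G.Adj a b → a ∈ X.1 := by
        intro a b haS hbX hadj
        by_contra haX
        obtain ⟨Y, hY, haY⟩ := hcover a haS
        exact hnoedge Y hY X hX (fun e => haX (e ▸ haY)) a haY b hbX hadj
      have hEq : compSet G S v = X.1 := by
        apply Set.Subset.antisymm
        · rintro u ⟨hu, hr⟩
          obtain ⟨p⟩ := hr
          exact walk_stay G hclosed p hvX
        · intro u huX
          exact ⟨hXS huX,
            reach_mono G hXS huX hvX (X.2.preconnected ⟨u, huX⟩ ⟨v.1, hvX⟩)⟩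
      rw [hEq]
      exact hP X hX
    · rw [hS, finsum_mem_biUnion (fun X hX Y hY hne => hdisj X hX Y hY hne)
        (Set.toFinite _) (fun i _ => Set.toFinite _)]
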